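/- arXiv:1509.01958 — 4 statements merged into one kernel-verified Lean document; each statement's English description precedes it below -/
import Mathlib

section
/- For every j ≥ 2, every divisor α > 1 of the Fermat number N_j = 2^(2^j) + 1 is of the form α = l · 2^(j+2) + 1 for some positive integer l (equivalently, α ≡ 1 (mod 2^(j+2))). -/
/-- The `j`-th Fermat number `N_j = 2^(2^j) + 1`. -/
def fermatN (j : ℕ) : ℕ := 2 ^ 2 ^ j + 1

lemma prime_dvd_fermat_form {j p : ℕ} (hj : 2 ≤ j) (hp : p.Prime)
    (hdvd : p ∣ fermatN j) : 2 ^ (j + 2) ∣ p - 1 := by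
  have hp2 : p ≠ 2 := by
    rintro rfl
    have : (2 : ℕ) ∣ 2 ^ 2 ^ j := dvd_pow_self 2 (by positivity)
    have h1 : (2 : ℕ) ∣ 1 := (Nat.dvd_add_right this).mp hdvd
    omega
  haveI : Fact p.Prime := ⟨hp⟩
  have hcast : ((fermatN j : ℕ) : ZMod p) = 0 :=
    (ZMod.natCast_eq_zero_iff _ _).mpr hdvd
  have h2 : (2 : ZMod p) ^ 2 ^ j = -1 := by
    have h : ((2 : ℕ) : ZMod p) ^ 2 ^ j + 1 = 0 := by
      push_cast [fermatN] at hcast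
      exact_mod_cast hcast
    push_cast at h
    linear_combination h
  have hplt : 2 < p := lt_of_le_of_ne hp.two_le (Ne.symm hp2)
  have hne : (-1 : ZMod p) ≠ 1 := by
    haveI : Fact (2 < p) := ⟨hplt⟩
    exact ZMod.neg_one_ne_one
  have hord2 : orderOf (2 : ZMod p) = 2 ^ (j + 1) := by
    apply orderOf_eq_prime_pow (p := 2) (n := j)
    · rw [h2]; exact hne
    · rw [pow_succ, pow_mul, h2]; ring
  have h2ne : (2 : ZMod p) ≠ 0 := by
    intro h
    have : ((2 : ℕ) : ZMod p) = 0 := by exact_mod_cast h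
    rw [ZMod.natCast_eq_zero_iff] at this
    exact hp2 ((Nat.prime_dvd_prime_iff_eq hp Nat.prime_two).mp this)
  have hdvd2 : 2 ^ (j + 1) ∣ p - 1 := by
    rw [← hord2]
    exact orderOf_dvd_of_pow_eq_one (ZMod.pow_card_sub_one_eq_one h2ne)
  have h8 : p % 8 = 1 := by
    have h8d : (8 : ℕ) ∣ p - 1 :=
      dvd_trans ⟨2 ^ (j - 2), by rw [show (8:ℕ) = 2 ^ 3 from rfl, ← pow_add]; congr 1; omega⟩ hdvd2
    obtain ⟨k, hk⟩ := h8d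
    omega
  obtain ⟨x, hx⟩ := (ZMod.exists_sq_eq_two_iff hp2).mpr (Or.inl h8)
  have hx2 : x ^ 2 = 2 := by rw [sq]; exact hx.symm
  have hxne : x ≠ 0 := by
    intro h
    rw [h] at hx2
    simp only [ne_eq, zero_pow, OfNat.ofNat_ne_zero, not_false_eq_true] at hx2
    exact h2ne hx2.symm
  have hordx : orderOf x = 2 ^ (j + 2) := by
    apply orderOf_eq_prime_pow (p := 2) (n := j + 1)
    · have e : x ^ 2 ^ (j + 1) = (x ^ 2) ^ 2 ^ j := by
        rw [← pow_mul]; congr 1; ring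
      rw [e, hx2, h2]; exact hne
    · have e : x ^ 2 ^ (j + 2) = ((x ^ 2) ^ 2 ^ j) ^ 2 := by
        rw [← pow_mul, ← pow_mul]; congr 1; ring
      rw [e, hx2, h2]; ring
  rw [← hordx]
  exact orderOf_dvd_of_pow_eq_one (ZMod.pow_card_sub_one_eq_one hxne)

/-- For every `j ≥ 2`, every divisor `α > 1` of the Fermat number `N_j = 2^(2^j) + 1`
is of the form `α = l · 2^(j+2) + 1` for some positive integer `l`. -/
theorem fermat_divisor_form (j : ℕ) (hj : 2 ≤ j) (α : ℕ) (hα : α ∣ fermatN j)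
    (hα1 : 1 < α) : ∃ l : ℕ, 0 < l ∧ α = l * 2 ^ (j + 2) + 1 := by
  set m := 2 ^ (j + 2) with hm
  have hm1 : 1 < m := Nat.one_lt_two_pow (by omega)
  have hα0 : α ≠ 0 := by omega
  have hcast : ((α : ℕ) : ZMod m) = ((1 : ℕ) : ZMod m) := by
    conv_lhs => rw [← Nat.prod_primeFactorsList hα0]
    rw [Nat.cast_list_prod]
    push_cast
    rw [List.prod_eq_one]
    intro y hy
    simp only [List.mem_map] at hy
    obtain ⟨p, hp, rfl⟩ := hy
    have hpp := Nat.prime_of_mem_primeFactorsList hp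
    have hpd : p ∣ fermatN j := (Nat.dvd_of_mem_primeFactorsList hp).trans hα
    obtain ⟨k, hk⟩ := prime_dvd_fermat_form hj hpp hpd
    rw [← hm] at hk
    have hpe : p = m * k + 1 := by have := hpp.two_le; omega
    rw [hpe]
    push_cast
    simp [hm]
  have hmod : α % m = 1 := by
    have := (ZMod.natCast_eq_natCast_iff _ _ _).mp hcast
    unfold Nat.ModEq at this
    rwa [Nat.mod_eq_of_lt hm1] at this
  refine ⟨α / m, ?_, ?_⟩
  · have hge : m ≤ α := by
      rcases Nat.lt_or_ge α m with h | h
      · rw [Nat.mod_eq_of_lt h] at hmod; omega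
      · exact h
    exact Nat.div_pos hge (by omega)
  · have h := Nat.div_add_mod α m
    rw [hmod, Nat.mul_comm] at h
    omega
end

section
/- For every i ≥ 1, the element c_i satisfies (c_i)^(N_i) = a_{i−1}. -/
set_option maxHeartbeats 1000000
set_option synthInstance.maxHeartbeats 400000


/-- `conwayL c n` is the subfield `L_{n-1}` of the algebraic closure of `F_2`
generated over `F_2` by `c 0, …, c (n-1)`; in particular `conwayL c 0 = ⊥ = F_2`. -/
noncomputable def conwayL (c : ℕ → AlgebraicClosure (ZMod 2)) (n : ℕ) :
    IntermediateField (ZMod 2) (AlgebraicClosure (ZMod 2)) :=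
  IntermediateField.adjoin (ZMod 2) (c '' Set.Iio n)

namespace ConwayAux

open Polynomial IntermediateField Module

noncomputable abbrev F2b := AlgebraicClosure (ZMod 2)

lemma htwo : (2 : F2b) = 0 := by
  simpa using CharP.cast_eq_zero F2b 2

lemma pow_pow_succ (x : F2b) (n : ℕ) :
    x ^ 2 ^ 2 ^ (n + 1) = (x ^ 2 ^ 2 ^ n) ^ 2 ^ 2 ^ n := by
  rw [← pow_mul]
  congr 1
  rw [← pow_add]
  congr 1
  rw [pow_succ]
  ring

lemma fix_of_B {x : F2b} {j : ℕ} (h : x ^ 2 ^ 2 ^ j = x + 1) :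
    ∀ k, j < k → x ^ 2 ^ 2 ^ k = x := by
  have base : x ^ 2 ^ 2 ^ (j + 1) = x := by
    rw [pow_pow_succ, h, add_pow_char_pow, h, one_pow]
    linear_combination htwo
  have gen : ∀ d, x ^ 2 ^ 2 ^ (j + 1 + d) = x := by
    intro d
    induction d with
    | zero => exact base
    | succ e ihe =>
      have : j + 1 + (e + 1) = (j + 1 + e) + 1 := rfl
      rw [this, pow_pow_succ, ihe, ihe]
  intro k hk
  have : k = j + 1 + (k - (j + 1)) := by omega
  rw [this]
  exact gen _

variable (c : ℕ → F2b)

lemma hquad (hc0 : c 0 ^ 2 + c 0 + 1 = 0)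
    (hrec : ∀ i : ℕ, c (i + 1) ^ 2 + c (i + 1) + ∏ j ∈ Finset.range (i + 1), c j = 0) (n : ℕ) :
    c n ^ 2 + c n + ∏ j ∈ Finset.range n, c j = 0 := by
  cases n with
  | zero => simpa using hc0
  | succ m => exact hrec m

lemma mem_L {n j : ℕ} (hj : j < n) : c j ∈ conwayL c n :=
  IntermediateField.subset_adjoin _ _ ⟨j, hj, rfl⟩

lemma prod_mem_L (n : ℕ) : (∏ j ∈ Finset.range n, c j) ∈ conwayL c n :=
  prod_mem fun j hj => mem_L c (Finset.mem_range.mp hj)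

lemma hnot' (hc0 : c 0 ^ 2 + c 0 + 1 = 0)
    (hnot : ∀ i : ℕ, c (i + 1) ∉ conwayL c (i + 1)) (n : ℕ) : c n ∉ conwayL c n := by
  cases n with
  | zero =>
    intro h
    have h0 : c '' Set.Iio 0 = (∅ : Set F2b) := by
      have : Set.Iio 0 = (∅ : Set ℕ) := by ext x; simp
      rw [this, Set.image_empty]
    rw [conwayL, h0, IntermediateField.adjoin_empty, IntermediateField.mem_bot] at h
    obtain ⟨r, hr⟩ := h
    have h01 : ∀ r : ZMod 2, r = 0 ∨ r = 1 := by decide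
    rcases h01 r with rfl | rfl
    · rw [map_zero] at hr
      rw [← hr] at hc0
      simp at hc0
    · rw [map_one] at hr
      rw [← hr] at hc0
      have : (1 : F2b) = 0 := by linear_combination hc0 - htwo
      exact one_ne_zero this
  | succ m => exact hnot m

/-- the quadratic polynomial over `conwayL c n` that `c n` satisfies -/
noncomputable def qpoly (n : ℕ) : (conwayL c n)[X] :=
  X ^ 2 + (X + C ⟨∏ j ∈ Finset.range n, c j, prod_mem_L c n⟩)

lemma qpoly_deglt (n : ℕ) :
    (X + C (⟨∏ j ∈ Finset.range n, c j, prod_mem_L c n⟩ : conwayL c n)).degree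
      < (X ^ 2 : (conwayL c n)[X]).degree := by
  rw [degree_X_pow, degree_X_add_C]
  exact_mod_cast one_lt_two

lemma qpoly_monic (n : ℕ) : (qpoly c n).Monic :=
  (monic_X_pow 2).add_of_left (qpoly_deglt c n)

lemma qpoly_degree (n : ℕ) : (qpoly c n).degree = 2 := by
  rw [qpoly, degree_add_eq_left_of_degree_lt (qpoly_deglt c n), degree_X_pow]
  norm_cast

lemma qpoly_aeval (hc0 : c 0 ^ 2 + c 0 + 1 = 0)
    (hrec : ∀ i : ℕ, c (i + 1) ^ 2 + c (i + 1) + ∏ j ∈ Finset.range (i + 1), c j = 0) (n : ℕ) :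
    Polynomial.aeval (c n) (qpoly c n) = 0 := by
  have h : (algebraMap (conwayL c n) F2b)
      (⟨∏ j ∈ Finset.range n, c j, prod_mem_L c n⟩ : conwayL c n)
        = ∏ j ∈ Finset.range n, c j := rfl
  rw [qpoly, map_add, map_add, aeval_X_pow, aeval_X, aeval_C, h]
  linear_combination hquad c hc0 hrec n

lemma isIntegral_cn (hc0 : c 0 ^ 2 + c 0 + 1 = 0)
    (hrec : ∀ i : ℕ, c (i + 1) ^ 2 + c (i + 1) + ∏ j ∈ Finset.range (i + 1), c j = 0) (n : ℕ) :
    IsIntegral (conwayL c n) (c n) :=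
  ⟨qpoly c n, qpoly_monic c n, by
    have := qpoly_aeval c hc0 hrec n
    rwa [aeval_def] at this⟩

lemma minpoly_natDegree (hc0 : c 0 ^ 2 + c 0 + 1 = 0)
    (hrec : ∀ i : ℕ, c (i + 1) ^ 2 + c (i + 1) + ∏ j ∈ Finset.range (i + 1), c j = 0)
    (hnot : ∀ i : ℕ, c (i + 1) ∉ conwayL c (i + 1)) (n : ℕ) :
    (minpoly (conwayL c n) (c n)).natDegree = 2 := by
  have hint := isIntegral_cn c hc0 hrec n
  have h2 : 2 ≤ (minpoly (conwayL c n) (c n)).natDegree := by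
    rw [minpoly.two_le_natDegree_iff hint]
    rintro ⟨y, hy⟩
    exact hnot' c hc0 hnot n (hy ▸ y.2)
  have hle : (minpoly (conwayL c n) (c n)).natDegree ≤ 2 := by
    have hdle := minpoly.min (conwayL c n) (c n) (qpoly_monic c n) (qpoly_aeval c hc0 hrec n)
    have := Polynomial.natDegree_le_natDegree hdle
    rwa [natDegree_eq_of_degree_eq_some (qpoly_degree c n)] at this
  omega

lemma conwayL_succ (n : ℕ) :
    conwayL c (n + 1)
      = (IntermediateField.adjoin (conwayL c n) {c n}).restrictScalars (ZMod 2) := by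
  have himg : c '' Set.Iio (n + 1) = c '' Set.Iio n ∪ {c n} := by
    have h' : Set.Iio (n + 1) = Set.Iio n ∪ {n} := by
      ext x
      simp only [Set.mem_Iio, Set.mem_union, Set.mem_singleton_iff]
      omega
    rw [h', Set.image_union, Set.image_singleton]
  rw [conwayL, himg, ← IntermediateField.adjoin_adjoin_left]
  rfl

lemma dimL (hc0 : c 0 ^ 2 + c 0 + 1 = 0)
    (hrec : ∀ i : ℕ, c (i + 1) ^ 2 + c (i + 1) + ∏ j ∈ Finset.range (i + 1), c j = 0)
    (hnot : ∀ i : ℕ, c (i + 1) ∉ conwayL c (i + 1)) (n : ℕ) :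
    FiniteDimensional (ZMod 2) (conwayL c n)
      ∧ Module.finrank (ZMod 2) (conwayL c n) = 2 ^ n := by
  induction n with
  | zero =>
    have h0 : conwayL c 0 = ⊥ := by
      have : Set.Iio 0 = (∅ : Set ℕ) := by ext x; simp
      rw [conwayL, this, Set.image_empty, IntermediateField.adjoin_empty]
    rw [h0]
    exact ⟨inferInstance, IntermediateField.finrank_bot⟩
  | succ n ih =>
    obtain ⟨h1, h2⟩ := ih
    haveI := h1
    have hint := isIntegral_cn c hc0 hrec n
    haveI hfd2 : FiniteDimensional (conwayL c n)
        (IntermediateField.adjoin (conwayL c n) {c n}) :=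
      IntermediateField.adjoin.finiteDimensional hint
    have hfr2 : Module.finrank (conwayL c n)
        (IntermediateField.adjoin (conwayL c n) {c n}) = 2 := by
      rw [IntermediateField.adjoin.finrank hint, minpoly_natDegree c hc0 hrec hnot n]
    have t1 : FiniteDimensional (ZMod 2) (IntermediateField.adjoin (conwayL c n) {c n}) :=
      Module.Finite.trans (↥(conwayL c n)) _
    have t2 : Module.finrank (ZMod 2)
        (IntermediateField.adjoin (conwayL c n) {c n}) = 2 ^ (n + 1) := by
      have := Module.finrank_mul_finrank (ZMod 2) (↥(conwayL c n))
        (↥(IntermediateField.adjoin (conwayL c n) {c n}))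
      rw [h2, hfr2] at this
      rw [pow_succ]
      exact this.symm
    rw [conwayL_succ]
    exact ⟨t1, t2⟩

theorem keyB (hc0 : c 0 ^ 2 + c 0 + 1 = 0)
    (hrec : ∀ i : ℕ, c (i + 1) ^ 2 + c (i + 1) + ∏ j ∈ Finset.range (i + 1), c j = 0)
    (hnot : ∀ i : ℕ, c (i + 1) ∉ conwayL c (i + 1)) :
    ∀ n, c n ^ 2 ^ 2 ^ n = c n + 1 := by
  intro n
  induction n using Nat.strong_induction_on with
  | _ n ih =>
    cases n with
    | zero =>
      norm_num
      linear_combination hc0 - (c 0 + 1) * htwo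
    | succ m =>
      have hfix : ∀ j, j < m + 1 → c j ^ 2 ^ 2 ^ (m + 1) = c j :=
        fun j hj => fix_of_B (ih j hj) (m + 1) hj
      have hqne : (2 : ℕ) ^ 2 ^ (m + 1) ≠ 0 := pow_ne_zero _ two_ne_zero
      have ha : (∏ j ∈ Finset.range (m + 1), c j) ^ 2 ^ 2 ^ (m + 1)
          = ∏ j ∈ Finset.range (m + 1), c j := by
        rw [← Finset.prod_pow]
        exact Finset.prod_congr rfl fun j hj => hfix j (Finset.mem_range.mp hj)
      have hr0 := hquad c hc0 hrec (m + 1)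
      have hroot : (c (m + 1) ^ 2 ^ 2 ^ (m + 1)) ^ 2 + c (m + 1) ^ 2 ^ 2 ^ (m + 1)
          + ∏ j ∈ Finset.range (m + 1), c j = 0 := by
        calc (c (m + 1) ^ 2 ^ 2 ^ (m + 1)) ^ 2 + c (m + 1) ^ 2 ^ 2 ^ (m + 1)
              + ∏ j ∈ Finset.range (m + 1), c j
            = (c (m + 1) ^ 2 + c (m + 1) + ∏ j ∈ Finset.range (m + 1), c j)
                ^ 2 ^ 2 ^ (m + 1) := by
              rw [add_pow_char_pow, add_pow_char_pow, ha, ← pow_mul, ← pow_mul, mul_comm]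
          _ = 0 := by rw [hr0, zero_pow hqne]
      have hfact : (c (m + 1) ^ 2 ^ 2 ^ (m + 1) - c (m + 1))
          * (c (m + 1) ^ 2 ^ 2 ^ (m + 1) + c (m + 1) + 1) = 0 := by
        linear_combination hroot - hr0
      rcases mul_eq_zero.mp hfact with h | h
      · exfalso
        have hyx : c (m + 1) ^ 2 ^ 2 ^ (m + 1) = c (m + 1) := sub_eq_zero.mp h
        have hn0 : (2 : ℕ) ^ (m + 1) ≠ 0 := pow_ne_zero _ two_ne_zero
        set g : (ZMod 2)[X] := X ^ 2 ^ 2 ^ (m + 1) - X with hg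
        have gne : g ≠ 0 := FiniteField.X_pow_card_pow_sub_X_ne_zero _ hn0 one_lt_two
        have gsep : g.Separable :=
          galois_poly_separable 2 (2 ^ 2 ^ (m + 1)) (dvd_pow_self 2 hn0)
        have gsplit : Splits (g.map (algebraMap (ZMod 2) F2b)) := IsAlgClosed.splits _
        have hcardT : Fintype.card (g.rootSet F2b) = 2 ^ 2 ^ (m + 1) := by
          rw [card_rootSet_eq_natDegree gsep gsplit,
            FiniteField.X_pow_card_pow_sub_X_natDegree_eq _ hn0 one_lt_two]
        have hmemT : ∀ x : F2b, x ∈ g.rootSet F2b ↔ x ^ 2 ^ 2 ^ (m + 1) = x := by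
          intro x
          rw [mem_rootSet_of_ne gne, hg]
          simp [sub_eq_zero]
        let Sf : Subfield F2b :=
          RingHom.eqLocusField (iterateFrobenius F2b 2 (2 ^ (m + 1))) (RingHom.id F2b)
        have hmemSf : ∀ x : F2b, x ∈ Sf ↔ x ^ 2 ^ 2 ^ (m + 1) = x := fun x => Iff.rfl
        let SIF : IntermediateField (ZMod 2) F2b :=
          Sf.toIntermediateField (fun r => by
            show (algebraMap (ZMod 2) F2b r) ^ 2 ^ 2 ^ (m + 1) = algebraMap (ZMod 2) F2b r
            rw [← map_pow, ZMod.pow_card_pow])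
        have hLsub : conwayL c (m + 1) ≤ SIF := by
          rw [conwayL]
          apply IntermediateField.adjoin_le_iff.mpr
          rintro x ⟨j, hj, rfl⟩
          exact (hmemSf _).mpr (hfix j hj)
        obtain ⟨hfd, hfr⟩ := dimL c hc0 hrec hnot (m + 1)
        haveI := hfd
        haveI : Finite ↥(conwayL c (m + 1)) := Module.finite_of_finite (ZMod 2)
        haveI : Fintype ↥(conwayL c (m + 1)) := Fintype.ofFinite _
        have hcardL : Fintype.card ↥(conwayL c (m + 1)) = 2 ^ 2 ^ (m + 1) := by
          rw [card_eq_pow_finrank (K := ZMod 2), ZMod.card, hfr]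
        have hsub : (conwayL c (m + 1) : Set F2b) ⊆ g.rootSet F2b :=
          fun x hx => (hmemT x).mpr ((hmemSf x).mp (hLsub hx))
        have heq : (conwayL c (m + 1) : Set F2b) = g.rootSet F2b := by
          apply Set.eq_of_subset_of_ncard_le hsub ?_ (Set.toFinite _)
          have e1 : (g.rootSet F2b).ncard = 2 ^ 2 ^ (m + 1) := by
            rw [← Nat.card_coe_set_eq, Nat.card_eq_fintype_card, hcardT]
          have e2 : (conwayL c (m + 1) : Set F2b).ncard = 2 ^ 2 ^ (m + 1) := by
            rw [← Nat.card_coe_set_eq, Nat.card_eq_fintype_card]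
            exact hcardL
          rw [e1, e2]
        have hc : c (m + 1) ∈ conwayL c (m + 1) := by
          have hmem : c (m + 1) ∈ g.rootSet F2b := (hmemT _).mpr hyx
          rw [← heq] at hmem
          exact hmem
        exact hnot m hc
      · linear_combination h - (c (m + 1) + 1) * htwo

end ConwayAux

/-- For every `i ≥ 1`, the element `c_i` of Conway's tower satisfies
`(c_i)^(N_i) = a_{i−1} = ∏_{j=0}^{i-1} c_j`. -/
theorem conway_pow_fermat (c : ℕ → AlgebraicClosure (ZMod 2))
    (hc0 : c 0 ^ 2 + c 0 + 1 = 0)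
    (hrec : ∀ i : ℕ, c (i + 1) ^ 2 + c (i + 1) + ∏ j ∈ Finset.range (i + 1), c j = 0)
    (hnot : ∀ i : ℕ, c (i + 1) ∉ conwayL c (i + 1))
    (i : ℕ) (hi : 1 ≤ i) :
    c i ^ fermatN i = ∏ j ∈ Finset.range i, c j := by
  have hB := ConwayAux.keyB c hc0 hrec hnot i
  have hq := ConwayAux.hquad c hc0 hrec i
  rw [fermatN, pow_add, pow_one, hB]
  linear_combination hq - (∏ j ∈ Finset.range i, c j) * ConwayAux.htwo
end

section
/- For every i ≥ 1, the element a_i satisfies (a_i)^(N_i) = (a_{i−1})^(N_i + 1). -/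
open IntermediateField Polynomial Finset

section Aux

local notation "FF" => AlgebraicClosure (ZMod 2)

variable (c : ℕ → FF)

lemma conwayL_zero : conwayL c 0 = ⊥ := by
  rw [conwayL]
  convert IntermediateField.adjoin_empty (ZMod 2) FF
  ext; simp

lemma conwayL_succ (n : ℕ) :
    conwayL c (n + 1) = ((conwayL c n)⟮c n⟯).restrictScalars (ZMod 2) := by
  rw [conwayL, show conwayL c n = adjoin (ZMod 2) (c '' Set.Iio n) from rfl,
    IntermediateField.adjoin_adjoin_left]
  rw [show Set.Iio (n+1) = insert n (Set.Iio n) by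
      ext x; simp only [Set.mem_Iio, Set.mem_insert_iff]; omega,
    Set.image_insert_eq, Set.union_singleton]

lemma prod_mem_conwayL (n : ℕ) : (∏ j ∈ Finset.range n, c j) ∈ conwayL c n :=
  prod_mem fun j hj => subset_adjoin _ _ ⟨j, by simpa using hj, rfl⟩

variable (hc0 : c 0 ^ 2 + c 0 + 1 = 0)
  (hrec : ∀ i : ℕ, c (i + 1) ^ 2 + c (i + 1) + ∏ j ∈ Finset.range (i + 1), c j = 0)
  (hnot : ∀ i : ℕ, c (i + 1) ∉ conwayL c (i + 1))

include hc0 hrec in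
lemma root_eq (n : ℕ) : c n ^ 2 + c n + ∏ j ∈ Finset.range n, c j = 0 := by
  cases n with
  | zero => simpa using hc0
  | succ n => exact hrec n

include hc0 hnot in
lemma cn_not_mem (n : ℕ) : c n ∉ conwayL c n := by
  cases n with
  | zero =>
    rw [conwayL_zero, IntermediateField.mem_bot]
    rintro ⟨y, hy⟩
    have h2 : (1 : FF) + 1 = 0 := CharTwo.add_self_eq_zero 1
    have hy01 : ∀ z : ZMod 2, z = 0 ∨ z = 1 := by decide
    rcases hy01 y with rfl | rfl
    · rw [map_zero] at hy
      rw [← hy] at hc0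
      simp at hc0
    · rw [map_one] at hy
      rw [← hy] at hc0
      exact one_ne_zero (by linear_combination hc0 - h2)
  | succ n => exact hnot n

include hc0 hrec hnot in
set_option synthInstance.maxHeartbeats 1000000 in
lemma step_finrank (n : ℕ) :
    Module.finrank (conwayL c n) ((conwayL c n)⟮c n⟯) = 2 := by
  set K := conwayL c n
  set x := c n
  have ha : (∏ j ∈ Finset.range n, c j) ∈ K := prod_mem_conwayL c n
  set a : K := ⟨∏ j ∈ Finset.range n, c j, ha⟩
  set p : Polynomial K := X ^ 2 + X + C a with hp
  have hq2 : ((X : Polynomial K) + C a).degree < ((X : Polynomial K) ^ 2).degree := by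
    rw [degree_X_pow, degree_X_add_C]
    norm_num
  have hpm : p.Monic := by
    have h1 : ((X : Polynomial K) ^ 2).Monic := monic_X_pow 2
    simpa [hp, add_assoc] using h1.add_of_left hq2
  have hpe : Polynomial.aeval x p = 0 := by
    have := root_eq c hc0 hrec n
    simp only [hp, map_add, map_pow, aeval_X, aeval_C]
    have haK : (algebraMap K FF) a = ∏ j ∈ Finset.range n, c j := rfl
    rw [haK]; exact this
  have hint : IsIntegral K x := ⟨p, hpm, hpe⟩
  have hdvd : minpoly K x ∣ p := minpoly.dvd K x hpe
  have hdeg : p.natDegree = 2 := by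
    have : p.degree = 2 := by
      rw [hp, add_assoc, degree_add_eq_left_of_degree_lt hq2, degree_X_pow]
      rfl
    exact natDegree_eq_of_degree_eq_some this
  have hle : (minpoly K x).natDegree ≤ 2 := by
    have := Polynomial.natDegree_le_of_dvd hdvd hpm.ne_zero
    omega
  have hpos : 0 < (minpoly K x).natDegree := minpoly.natDegree_pos hint
  have hne1 : (minpoly K x).natDegree ≠ 1 := by
    intro h1
    have : (minpoly K x).degree = 1 := by
      rw [degree_eq_natDegree (minpoly.ne_zero hint), h1]; rfl
    rw [minpoly.degree_eq_one_iff] at this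
    obtain ⟨y, hy⟩ := this
    have : x ∈ K := by rw [← hy]; exact y.2
    exact cn_not_mem c hc0 hnot n this
  rw [IntermediateField.adjoin.finrank hint]
  omega

include hc0 hrec hnot in
lemma conwayL_finrank (n : ℕ) :
    Module.finrank (ZMod 2) (conwayL c n) = 2 ^ n := by
  induction n with
  | zero => rw [conwayL_zero]; simpa using IntermediateField.finrank_bot
  | succ n ih =>
    have e := IntermediateField.equivOfEq (conwayL_succ c n)
    have h1 : Module.finrank (ZMod 2) (conwayL c (n+1))
        = Module.finrank (ZMod 2) (((conwayL c n)⟮c n⟯).restrictScalars (ZMod 2)) :=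
      e.toLinearEquiv.finrank_eq
    have h2 : Module.finrank (ZMod 2) (((conwayL c n)⟮c n⟯).restrictScalars (ZMod 2))
        = Module.finrank (ZMod 2) ((conwayL c n)⟮c n⟯) := rfl
    have h3 := Module.finrank_mul_finrank (ZMod 2) (conwayL c n) ((conwayL c n)⟮c n⟯)
    rw [h1, h2, ← h3, ih, step_finrank c hc0 hrec hnot n]
    ring

lemma conwayL_finiteDimensional (n : ℕ) :
    FiniteDimensional (ZMod 2) (conwayL c n) := by
  haveI : Finite (c '' Set.Iio n) := Set.Finite.to_subtype
    ((Set.finite_Iio n).image c)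
  exact IntermediateField.finiteDimensional_adjoin fun y _ =>
    (Algebra.IsAlgebraic.isAlgebraic y).isIntegral

include hc0 hrec hnot in
lemma card_conwayL (n : ℕ) [Fintype (conwayL c n)] :
    Fintype.card (conwayL c n) = 2 ^ 2 ^ n := by
  haveI := conwayL_finiteDimensional c n
  rw [Module.card_eq_pow_finrank (K := ZMod 2) (V := conwayL c n), ZMod.card,
    conwayL_finrank c hc0 hrec hnot n]

include hc0 hrec hnot in
lemma pow_card_conwayL (n : ℕ) {x : FF} (hx : x ∈ conwayL c n) :
    x ^ (2 ^ 2 ^ n) = x := by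
  haveI := conwayL_finiteDimensional c n
  haveI : Finite (conwayL c n) := Module.finite_of_finite (ZMod 2)
  haveI : Fintype (conwayL c n) := Fintype.ofFinite _
  have hcard := card_conwayL c hc0 hrec hnot n
  have := FiniteField.pow_card (⟨x, hx⟩ : conwayL c n)
  rw [hcard] at this
  simpa [← Subtype.ext_iff, SubmonoidClass.coe_pow] using congrArg Subtype.val this

include hc0 hrec in
lemma c_pow_two_pow (n m : ℕ) :
    c n ^ (2 ^ m) = c n + ∑ t ∈ Finset.range m, (∏ j ∈ Finset.range n, c j) ^ (2 ^ t) := by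
  have h2 : (2 : FF) = 0 := by
    have : (1 : FF) + 1 = 0 := CharTwo.add_self_eq_zero 1
    linear_combination this
  have hroot := root_eq c hc0 hrec n
  induction m with
  | zero => simp
  | succ m ih =>
    have hsq : c n ^ (2 ^ (m+1)) = (c n ^ (2 ^ m)) ^ 2 := by
      rw [← pow_mul, pow_succ]
    rw [hsq, ih, add_pow_char (R := FF) (p := 2),
      show (c n) ^ 2 = c n + ∏ j ∈ Finset.range n, c j by
        linear_combination hroot - (c n + ∏ j ∈ Finset.range n, c j) * h2,
      sum_pow_char, Finset.sum_range_succ' (fun t => (∏ j ∈ Finset.range n, c j) ^ (2 ^ t)) m]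
    have : ∀ t, ((∏ j ∈ Finset.range n, c j) ^ (2 ^ t)) ^ 2
        = (∏ j ∈ Finset.range n, c j) ^ (2 ^ (t + 1)) := fun t => by
      rw [← pow_mul, pow_succ]
    rw [Finset.sum_congr rfl fun t _ => this t]
    simp only [pow_zero, pow_one]
    ring

end Aux

/-- For every `i ≥ 1`, `(a_i)^(N_i) = (a_{i−1})^(N_i + 1)`,
where `a_k = ∏_{j=0}^{k} c_j`. -/
theorem conway_a_pow_fermat (c : ℕ → AlgebraicClosure (ZMod 2))
    (hc0 : c 0 ^ 2 + c 0 + 1 = 0)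
    (hrec : ∀ i : ℕ, c (i + 1) ^ 2 + c (i + 1) + ∏ j ∈ Finset.range (i + 1), c j = 0)
    (hnot : ∀ i : ℕ, c (i + 1) ∉ conwayL c (i + 1))
    (i : ℕ) (hi : 1 ≤ i) :
    (∏ j ∈ Finset.range (i + 1), c j) ^ fermatN i
      = (∏ j ∈ Finset.range i, c j) ^ (fermatN i + 1) := by
  classical
  set a : AlgebraicClosure (ZMod 2) := ∏ j ∈ Finset.range i, c j with ha_def
  set q : ℕ := 2 ^ 2 ^ i with hq_def
  have h2 : (2 : AlgebraicClosure (ZMod 2)) = 0 := by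
    have : (1 : AlgebraicClosure (ZMod 2)) + 1 = 0 := CharTwo.add_self_eq_zero 1
    linear_combination this
  have ha : a ∈ conwayL c i := prod_mem_conwayL c i
  have haq : a ^ q = a := pow_card_conwayL c hc0 hrec hnot i ha
  set S : AlgebraicClosure (ZMod 2) := ∑ t ∈ Finset.range (2 ^ i), a ^ (2 ^ t) with hS_def
  have hcq : c i ^ q = c i + S := by
    have := c_pow_two_pow c hc0 hrec i (2 ^ i)
    rwa [← hq_def] at this
  have hroot := root_eq c hc0 hrec i
  have hc2c : c i ^ 2 + c i = a := by
    linear_combination hroot - a * h2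
  have hS2 : S ^ 2 = S := by
    have e1 := Finset.sum_range_succ' (fun t => a ^ (2 ^ t)) (2 ^ i)
    have e2 := Finset.sum_range_succ (fun t => a ^ (2 ^ t)) (2 ^ i)
    have hstep : ∀ t, (a ^ (2 ^ t)) ^ 2 = a ^ (2 ^ (t + 1)) := fun t => by
      rw [← pow_mul, pow_succ]
    have hS2' : S ^ 2 = ∑ t ∈ Finset.range (2 ^ i), a ^ (2 ^ (t + 1)) := by
      rw [hS_def, sum_pow_char, Finset.sum_congr rfl fun t _ => hstep t]
    rw [hS2']
    rw [pow_zero, pow_one] at e1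
    rw [show (2:ℕ) ^ (2 ^ i) = q from rfl, haq] at e2
    linear_combination e2 - e1
  have hS01 : S = 0 ∨ S = 1 := by
    have : S * (S - 1) = 0 := by linear_combination hS2
    rcases mul_eq_zero.mp this with h | h
    · exact Or.inl h
    · exact Or.inr (by linear_combination h)
  have hnotmem : c i ∉ conwayL c i := cn_not_mem c hc0 hnot i
  rcases hS01 with hS | hS
  · exfalso
    have hfix : c i ^ q = c i := by rw [hcq, hS, add_zero]
    haveI := conwayL_finiteDimensional c i
    haveI : Finite (conwayL c i) := Module.finite_of_finite (ZMod 2)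
    haveI : Fintype (conwayL c i) := Fintype.ofFinite _
    have hcard := card_conwayL c hc0 hrec hnot i
    set P : Polynomial (AlgebraicClosure (ZMod 2)) := X ^ q - X with hP_def
    have hq2 : 2 ≤ q := by
      have h1 : 2 ^ 1 ≤ 2 ^ i := Nat.pow_le_pow_right (by norm_num) hi
      calc 2 = 2 ^ 1 := rfl
        _ ≤ 2 ^ 2 ^ 1 := by norm_num
        _ ≤ 2 ^ 2 ^ i := Nat.pow_le_pow_right (by norm_num) h1
    have hPdeg : P.natDegree = q := by
      rw [hP_def, natDegree_sub_eq_left_of_natDegree_lt, natDegree_X_pow]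
      rw [natDegree_X_pow, natDegree_X]; omega
    have hPne : P ≠ 0 := by
      intro h
      have := hPdeg
      rw [h, natDegree_zero] at this
      omega
    set s : Finset (AlgebraicClosure (ZMod 2)) :=
      Finset.univ.image (fun y : conwayL c i => (y : AlgebraicClosure (ZMod 2))) with hs_def
    have hmem_s : ∀ x, x ∈ s ↔ x ∈ conwayL c i := by
      intro x
      simp only [hs_def, Finset.mem_image, Finset.mem_univ, true_and]
      constructor
      · rintro ⟨y, rfl⟩; exact y.2
      · intro hx; exact ⟨⟨x, hx⟩, rfl⟩
    have hsub : insert (c i) s ⊆ P.roots.toFinset := by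
      intro x hx
      have hxq : x ^ q = x := by
        rcases Finset.mem_insert.mp hx with rfl | hxs
        · exact hfix
        · exact pow_card_conwayL c hc0 hrec hnot i ((hmem_s x).mp hxs)
      rw [Multiset.mem_toFinset, mem_roots hPne]
      simp [hP_def, IsRoot, sub_eq_zero, hxq]
    have hcards : s.card = q := by
      rw [hs_def, Finset.card_image_of_injective _ Subtype.val_injective,
        Finset.card_univ, hcard]
    have hci : c i ∉ s := fun h => hnotmem ((hmem_s _).mp h)
    have hcardins : (insert (c i) s).card = q + 1 := by
      rw [Finset.card_insert_of_notMem hci, hcards]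
    have hle : (insert (c i) s).card ≤ P.roots.toFinset.card :=
      Finset.card_le_card hsub
    have hle2 : P.roots.toFinset.card ≤ q := by
      calc P.roots.toFinset.card ≤ Multiset.card P.roots := Multiset.toFinset_card_le _
        _ ≤ P.natDegree := P.card_roots'
        _ = q := hPdeg
    omega
  · have hfrob : c i ^ q = c i + 1 := by rw [hcq, hS]
    have hfq : fermatN i = q + 1 := rfl
    rw [Finset.prod_range_succ, ← ha_def, hfq, mul_pow]
    calc a ^ (q+1) * c i ^ (q+1)
        = (a ^ q * a) * (c i ^ q * c i) := by rw [pow_succ, pow_succ]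
      _ = (a * a) * ((c i + 1) * c i) := by rw [haq, hfrob]
      _ = a * a * (c i ^ 2 + c i) := by ring
      _ = a * a * a := by rw [hc2c]
      _ = a ^ (q + 1 + 1) := by rw [pow_succ, pow_succ, haq]
end

section
/- For every k ≥ 0 and every i > k, the identity (c_i)^(∏_{j=0}^{k} N_{i−j}) = (a_{i−k−1})^(∏_{j=1}^{k} (N_{i−j} + 1)) holds, where an empty product equals 1. -/
namespace ConwayAux

local notation "F" => AlgebraicClosure (ZMod 2)

lemma two_eq_zero : (2 : F) = 0 := CharTwo.two_eq_zero

lemma pow_pow_fix {M : Type*} [Monoid M] {x : M} {q : ℕ} (h : x ^ q = x) (t : ℕ) :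
    x ^ q ^ t = x := by
  induction t with
  | zero => simp
  | succ t ih => rw [pow_succ, pow_mul, ih, h]

lemma pow_fix_mono {x : F} {m n : ℕ} (hmn : m ≤ n) (h : x ^ 2 ^ 2 ^ m = x) :
    x ^ 2 ^ 2 ^ n = x := by
  have e : (2 : ℕ) ^ 2 ^ n = (2 ^ 2 ^ m) ^ 2 ^ (n - m) := by
    rw [← pow_mul, ← pow_add, Nat.add_sub_cancel' hmn]
  rw [e]; exact pow_pow_fix h _

lemma conj_to_fix {x : F} {m : ℕ} (h : x ^ 2 ^ 2 ^ m = x + 1) :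
    x ^ 2 ^ 2 ^ (m + 1) = x := by
  have e : (2 : ℕ) ^ 2 ^ (m + 1) = 2 ^ 2 ^ m * 2 ^ 2 ^ m := by
    rw [← pow_add, pow_succ, mul_two]
  rw [e, pow_mul, h, add_pow_char_pow, h, one_pow]
  rw [add_assoc, one_add_one_eq_two, two_eq_zero, add_zero]

/-- The fixed set of the `2^m`-th iterate of Frobenius. -/
def K (m : ℕ) : Set F := {x : F | x ^ 2 ^ 2 ^ m = x}

lemma K_finite_card (m : ℕ) : (K m).Finite ∧ (K m).ncard ≤ 2 ^ 2 ^ m := by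
  classical
  have hq : 2 ≤ (2:ℕ) ^ 2 ^ m := by
    calc 2 = 2 ^ 1 := (pow_one 2).symm
    _ ≤ 2 ^ 2 ^ m := Nat.pow_le_pow_right (by norm_num) Nat.one_le_two_pow
  set p : Polynomial F := Polynomial.X ^ (2 ^ 2 ^ m) - Polynomial.X with hp
  have hne : p ≠ 0 := by
    intro h
    have := congrArg (fun q => Polynomial.coeff q (2 ^ 2 ^ m)) h
    simp [hp, Polynomial.coeff_X, (show (1:ℕ) ≠ 2 ^ 2 ^ m by omega)] at this
  have hsub : K m ⊆ (p.roots.toFinset : Set F) := by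
    intro x hx
    simp only [Finset.coe_sort_coe, Finset.mem_coe, Multiset.mem_toFinset,
      Polynomial.mem_roots hne]
    simp only [hp, Polynomial.IsRoot, Polynomial.eval_sub, Polynomial.eval_pow,
      Polynomial.eval_X, sub_eq_zero]
    exact hx
  refine ⟨Set.Finite.subset p.roots.toFinset.finite_toSet hsub, ?_⟩
  have h1 := Set.ncard_le_ncard hsub p.roots.toFinset.finite_toSet
  rw [Set.ncard_coe_finset] at h1
  refine h1.trans ?_
  refine (Multiset.toFinset_card_le p.roots).trans ?_
  refine (Polynomial.card_roots' p).trans ?_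
  refine (Polynomial.natDegree_sub_le _ _).trans ?_
  rw [Polynomial.natDegree_X_pow, Polynomial.natDegree_X]
  omega

lemma ncard_prod' {α β : Type*} (s : Set α) (t : Set β) :
    (s ×ˢ t).ncard = s.ncard * t.ncard := by
  rw [← Nat.card_coe_set_eq, ← Nat.card_coe_set_eq, ← Nat.card_coe_set_eq,
    ← Nat.card_prod]
  exact Nat.card_congr (Equiv.Set.prod s t)

end ConwayAux

open ConwayAux in
lemma conway_key (c : ℕ → AlgebraicClosure (ZMod 2))
    (hc0 : c 0 ^ 2 + c 0 + 1 = 0)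
    (hrec : ∀ i : ℕ, c (i + 1) ^ 2 + c (i + 1) + ∏ j ∈ Finset.range (i + 1), c j = 0)
    (hnot : ∀ i : ℕ, c (i + 1) ∉ conwayL c (i + 1)) :
    ∀ n : ℕ, (∀ j ≤ n, c j ^ 2 ^ 2 ^ j = c j + 1) ∧
      (ConwayAux.K n).ncard = 2 ^ 2 ^ n ∧
      ConwayAux.K n ⊆ (conwayL c n : Set (AlgebraicClosure (ZMod 2))) := by
  intro n
  induction n with
  | zero =>
    have hK0 : K 0 = {0, 1} := by
      ext x
      have e : (2:ℕ) ^ 2 ^ 0 = 2 := by norm_num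
      simp only [K, Set.mem_setOf_eq, Set.mem_insert_iff, Set.mem_singleton_iff, e]
      constructor
      · intro h
        have h' : x * (x - 1) = 0 := by linear_combination h
        rcases mul_eq_zero.mp h' with h0 | h1
        · exact Or.inl h0
        · exact Or.inr (by linear_combination h1)
      · rintro (rfl | rfl) <;> simp
    refine ⟨?_, ?_, ?_⟩
    · intro j hj
      interval_cases j
      have e : (2:ℕ) ^ 2 ^ 0 = 2 := by norm_num
      rw [e]
      linear_combination hc0 - (c 0 + 1) * ConwayAux.two_eq_zero
    · rw [hK0, Set.ncard_pair (zero_ne_one)]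
      norm_num
    · rw [hK0]
      rintro x (rfl | rfl)
      · exact zero_mem (conwayL c 0)
      · exact one_mem (conwayL c 0)
  | succ n ih =>
    obtain ⟨hconjs, hcard, hsub⟩ := ih
    have hfix : ∀ j ≤ n, c j ^ 2 ^ 2 ^ (n+1) = c j := fun j hj =>
      pow_fix_mono (Nat.succ_le_succ hj) (conj_to_fix (hconjs j hj))
    have hcn : c n ^ 2 ^ 2 ^ n = c n + 1 := hconjs n le_rfl
    have hcn_notK : c n ∉ K n := by
      intro h
      rw [K, Set.mem_setOf_eq, hcn] at h
      exact one_ne_zero (by linear_combination h)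
    have hinj : Set.InjOn (fun p : _ × _ => p.1 + p.2 * c n) (K n ×ˢ K n) := by
      rintro ⟨u, v⟩ hm ⟨u', v'⟩ hm' heq
      simp only [Set.mem_prod] at hm hm'
      obtain ⟨hu, hv⟩ := hm
      obtain ⟨hu', hv'⟩ := hm'
      simp only [K, Set.mem_setOf_eq] at hu hv hu' hv'
      simp only at heq
      by_cases hvv : v = v'
      · subst hvv
        have : u = u' := by
          have := add_right_cancel heq
          exact this
        simp [Prod.ext_iff, this]
      · exfalso
        have hvv0 : v + v' ≠ 0 := by
          intro h0
          apply hvv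
          have h1 : v = -v' := eq_neg_of_add_eq_zero_left h0
          rwa [CharTwo.neg_eq] at h1
        have hc_eq : c n = (u + u') / (v + v') := by
          rw [eq_div_iff hvv0]
          linear_combination -heq + (v * c n - u') * ConwayAux.two_eq_zero
        apply hcn_notK
        rw [K, Set.mem_setOf_eq, hc_eq, div_pow, add_pow_char_pow, add_pow_char_pow,
          hu, hu', hv, hv']
    have hS_sub : (fun p : _ × _ => p.1 + p.2 * c n) '' (K n ×ˢ K n) ⊆ K (n+1) := by
      rintro _ ⟨⟨u, v⟩, hm, rfl⟩
      simp only [Set.mem_prod] at hm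
      obtain ⟨hu, hv⟩ := hm
      simp only [K, Set.mem_setOf_eq] at hu hv ⊢
      rw [add_pow_char_pow, mul_pow, pow_fix_mono (Nat.le_succ n) hu,
        pow_fix_mono (Nat.le_succ n) hv, conj_to_fix hcn]
    have hS_card : ((fun p : _ × _ => p.1 + p.2 * c n) '' (K n ×ˢ K n)).ncard
        = 2 ^ 2 ^ (n+1) := by
      rw [Set.ncard_image_of_injOn hinj, ncard_prod', hcard, ← pow_add]
      congr 1
      rw [pow_succ, mul_two]
    have hKS : (fun p : _ × _ => p.1 + p.2 * c n) '' (K n ×ˢ K n) = K (n+1) :=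
      Set.eq_of_subset_of_ncard_le hS_sub
        (by rw [hS_card]; exact (K_finite_card (n+1)).2) (K_finite_card (n+1)).1
    have hL : conwayL c n ≤ conwayL c (n+1) :=
      IntermediateField.adjoin.mono _ _ _
        (Set.image_mono (f := c) (Set.Iio_subset_Iio (Nat.le_succ n)))
    have hcnL : c n ∈ conwayL c (n+1) :=
      IntermediateField.subset_adjoin _ _ (Set.mem_image_of_mem c (by simp))
    have hsub' : K (n+1) ⊆ (conwayL c (n+1) : Set (AlgebraicClosure (ZMod 2))) := by
      intro x hx
      rw [← hKS] at hx
      obtain ⟨⟨u, v⟩, hm, rfl⟩ := hx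
      simp only [Set.mem_prod] at hm
      exact add_mem (hL (hsub hm.1)) (mul_mem (hL (hsub hm.2)) hcnL)
    refine ⟨?_, by rw [← hKS]; exact hS_card, hsub'⟩
    intro j hj
    rcases Nat.lt_or_ge j (n+1) with h | h
    · exact hconjs j (Nat.lt_succ_iff.mp h)
    · have hj' : j = n + 1 := le_antisymm hj h
      subst hj'
      set a : AlgebraicClosure (ZMod 2) := ∏ j ∈ Finset.range (n+1), c j with ha
      have haQ : a ^ 2 ^ 2 ^ (n+1) = a := by
        rw [ha, ← Finset.prod_pow]
        exact Finset.prod_congr rfl fun j hj =>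
          hfix j (Nat.lt_succ_iff.mp (Finset.mem_range.mp hj))
      have h2 : c (n+1) ^ 2 = c (n+1) + a := by
        linear_combination (hrec n) - (c (n+1) + a) * ConwayAux.two_eq_zero
      have hxq2 : (c (n+1) ^ 2 ^ 2 ^ (n+1)) ^ 2 = c (n+1) ^ 2 ^ 2 ^ (n+1) + a := by
        rw [← pow_mul, mul_comm, pow_mul, h2, add_pow_char_pow, haQ]
      have key0 : (c (n+1) ^ 2 ^ 2 ^ (n+1) + c (n+1)) *
          (c (n+1) ^ 2 ^ 2 ^ (n+1) + c (n+1) + 1) = 0 := by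
        linear_combination hxq2 + h2 +
          (c (n+1) ^ 2 ^ 2 ^ (n+1) * c (n+1) + c (n+1) ^ 2 ^ 2 ^ (n+1) + c (n+1) + a) *
            ConwayAux.two_eq_zero
      rcases mul_eq_zero.mp key0 with h0 | h1
      · exfalso
        have hxK : c (n+1) ∈ K (n+1) := by
          rw [K, Set.mem_setOf_eq]
          have h1 : c (n+1) ^ 2 ^ 2 ^ (n+1) = -(c (n+1)) := eq_neg_of_add_eq_zero_left h0
          rwa [CharTwo.neg_eq] at h1
        exact hnot n (hsub' hxK)
      · linear_combination h1 - (c (n+1) + 1) * ConwayAux.two_eq_zero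

/-- For every `k ≥ 0` and every `i > k`,
`(c_i)^(∏_{j=0}^{k} N_{i−j}) = (a_{i−k−1})^(∏_{j=1}^{k} (N_{i−j} + 1))`,
where `a_m = ∏_{j=0}^{m} c_j` and an empty product equals 1. -/
theorem conway_c_pow_prod_fermat (c : ℕ → AlgebraicClosure (ZMod 2))
    (hc0 : c 0 ^ 2 + c 0 + 1 = 0)
    (hrec : ∀ i : ℕ, c (i + 1) ^ 2 + c (i + 1) + ∏ j ∈ Finset.range (i + 1), c j = 0)
    (hnot : ∀ i : ℕ, c (i + 1) ∉ conwayL c (i + 1))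
    (k i : ℕ) (hik : k < i) :
    c i ^ (∏ j ∈ Finset.range (k + 1), fermatN (i - j))
      = (∏ j ∈ Finset.range (i - k), c j) ^ (∏ j ∈ Finset.Icc 1 k, (fermatN (i - j) + 1)) := by
  have hconj : ∀ n, c n ^ 2 ^ 2 ^ n = c n + 1 :=
    fun n => (conway_key c hc0 hrec hnot n).1 n le_rfl
  have hfix : ∀ j n, j < n → c j ^ 2 ^ 2 ^ n = c j :=
    fun j n h => ConwayAux.pow_fix_mono h (ConwayAux.conj_to_fix (hconj j))
  have hprodfix : ∀ m n, m ≤ n →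
      (∏ j ∈ Finset.range m, c j) ^ 2 ^ 2 ^ n = ∏ j ∈ Finset.range m, c j := by
    intro m n h
    rw [← Finset.prod_pow]
    exact Finset.prod_congr rfl fun j hj =>
      hfix j n (lt_of_lt_of_le (Finset.mem_range.mp hj) h)
  induction k with
  | zero =>
    obtain ⟨m, rfl⟩ : ∃ m, i = m + 1 := ⟨i - 1, by omega⟩
    simp only [zero_add, Finset.prod_range_one, Nat.sub_zero,
      Finset.Icc_eq_empty (by norm_num : ¬(1:ℕ) ≤ 0), Finset.prod_empty, pow_one, fermatN]
    rw [pow_succ, hconj (m+1)]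
    linear_combination hrec m - (∏ j ∈ Finset.range (m+1), c j) * ConwayAux.two_eq_zero
  | succ k ih =>
    have IH := ih (by omega)
    obtain ⟨m', hm'⟩ : ∃ m', i - (k+1) = m' + 1 := ⟨i - k - 2, by omega⟩
    have hik' : i - k = m' + 2 := by omega
    have hstep : (∏ j ∈ Finset.range (i - k), c j) ^ (fermatN (i - (k+1)))
        = (∏ j ∈ Finset.range (i - (k+1)), c j) ^ (fermatN (i - (k+1)) + 1) := by
      rw [hik', hm', Finset.prod_range_succ]
      simp only [fermatN]
      have hcm2 : c (m'+1) ^ 2 = c (m'+1) + ∏ j ∈ Finset.range (m'+1), c j := by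
        linear_combination hrec m' -
          (c (m'+1) + ∏ j ∈ Finset.range (m'+1), c j) * ConwayAux.two_eq_zero
      have e1 : ((∏ j ∈ Finset.range (m'+1), c j) * c (m'+1)) ^ (2 ^ 2 ^ (m'+1) + 1)
          = (∏ j ∈ Finset.range (m'+1), c j) * (c (m'+1) + 1) *
            ((∏ j ∈ Finset.range (m'+1), c j) * c (m'+1)) := by
        rw [pow_succ, mul_pow, hprodfix (m'+1) (m'+1) le_rfl, hconj (m'+1)]
      have e2 : (∏ j ∈ Finset.range (m'+1), c j) ^ (2 ^ 2 ^ (m'+1) + 1 + 1)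
          = ((∏ j ∈ Finset.range (m'+1), c j) * (∏ j ∈ Finset.range (m'+1), c j)) *
            (∏ j ∈ Finset.range (m'+1), c j) := by
        rw [pow_succ, pow_succ, hprodfix (m'+1) (m'+1) le_rfl]
      rw [e1, e2]
      linear_combination ((∏ j ∈ Finset.range (m'+1), c j) ^ 2) * hcm2 +
        ((∏ j ∈ Finset.range (m'+1), c j) ^ 2 * c (m'+1)) * ConwayAux.two_eq_zero
    calc c i ^ ∏ j ∈ Finset.range (k + 1 + 1), fermatN (i - j)
        = (c i ^ ∏ j ∈ Finset.range (k + 1), fermatN (i - j)) ^ fermatN (i - (k+1)) := by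
          rw [Finset.prod_range_succ, pow_mul]
      _ = ((∏ j ∈ Finset.range (i - k), c j) ^
            (∏ j ∈ Finset.Icc 1 k, (fermatN (i - j) + 1))) ^ fermatN (i - (k+1)) := by
          rw [IH]
      _ = ((∏ j ∈ Finset.range (i - k), c j) ^ fermatN (i - (k+1))) ^
            (∏ j ∈ Finset.Icc 1 k, (fermatN (i - j) + 1)) := by
          rw [← pow_mul, mul_comm, pow_mul]
      _ = ((∏ j ∈ Finset.range (i - (k+1)), c j) ^ (fermatN (i - (k+1)) + 1)) ^
            (∏ j ∈ Finset.Icc 1 k, (fermatN (i - j) + 1)) := by rw [hstep]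
      _ = (∏ j ∈ Finset.range (i - (k+1)), c j) ^
            (∏ j ∈ Finset.Icc 1 (k+1), (fermatN (i - j) + 1)) := by
          rw [Finset.prod_Icc_succ_top (by omega : 1 ≤ k+1), ← pow_mul, mul_comm]
end
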